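/- (Theorem IVA.) Let A and S be n×n complex matrices, Cu and S_c p×n complex matrices, and s ∈ ℂ with Φ := sI − A invertible. Let G be the block matrix with block rows (v1, v2, e) and block columns (η1, η2, w_p) given by row v1 = [0, 0, I_n], row v2 = [0, 0, I_n], row e = [Cu·Φ⁻¹·S, S_c, 0], and define m := inf{ max(|δ'|, |δ_c'|, ‖Δ_f‖) : δ', δ_c' ∈ ℝ, Δ_f an n×p complex matrix, det(I_{2n+p} − G·block-diag(δ'I_n, δ_c'I_n, Δ_f)) = 0 }. Assume m > 0 and the infimum set is nonempty. Then for all δ, δ_c ∈ ℝ with max(|δ|, |δ_c|) < m, ‖Cu·Φ⁻¹·δS + δ_c·S_c‖ ≤ 1/m, where ‖·‖ is the L2 operator norm. -/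

import Mathlib

open scoped Matrix.Norms.L2Operator

open Matrix in
noncomputable instance matrixCStarAlgebra (q : ℕ) :
    CStarAlgebra (Matrix (Fin q) (Fin q) ℂ) :=
  { (inferInstance : NormedRing (Matrix (Fin q) (Fin q) ℂ)),
    (inferInstance : StarRing (Matrix (Fin q) (Fin q) ℂ)),
    (inferInstance : CStarRing (Matrix (Fin q) (Fin q) ℂ)),
    (inferInstance : NormedAlgebra ℂ (Matrix (Fin q) (Fin q) ℂ)),
    (inferInstance : CompleteSpace (Matrix (Fin q) (Fin q) ℂ)),
    (inferInstance : StarModule ℂ (Matrix (Fin q) (Fin q) ℂ)) with }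

open Matrix in
lemma aux_det_zero_of_mem_spectrum {q : ℕ} (M : Matrix (Fin q) (Fin q) ℂ) {r : ℝ}
    (h : r ∈ spectrum ℝ M) :
    ((r : ℂ) • (1 : Matrix (Fin q) (Fin q) ℂ) - M).det = 0 := by
  rw [spectrum.mem_iff] at h
  by_contra hdet
  apply h
  have halg : (algebraMap ℝ (Matrix (Fin q) (Fin q) ℂ)) r
      = (r : ℂ) • (1 : Matrix (Fin q) (Fin q) ℂ) := by
    rw [Algebra.algebraMap_eq_smul_one]
    ext i j
    simp [Matrix.smul_apply, Complex.real_smul]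
  rw [halg]
  exact (Matrix.isUnit_iff_isUnit_det _).2 (isUnit_iff_ne_zero.2 hdet)

open Matrix in
open scoped ComplexOrder in
lemma aux_exists_destabilizer {p n : ℕ} (T : Matrix (Fin p) (Fin n) ℂ) (hT : 0 < ‖T‖) :
    ∃ Δf : Matrix (Fin n) (Fin p) ℂ, ‖Δf‖ = ‖T‖⁻¹ ∧
      ((1 : Matrix (Fin p) (Fin p) ℂ) - T * Δf).det = 0 := by
  rcases Nat.eq_zero_or_pos p with hp | hp
  · exfalso
    subst hp
    have hT0 : T = 0 := by ext i j; exact i.elim0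
    rw [hT0, norm_zero] at hT
    exact lt_irrefl 0 hT
  haveI : Nonempty (Fin p) := ⟨⟨0, hp⟩⟩
  obtain ⟨i0⟩ := (inferInstance : Nonempty (Fin p))
  haveI : Nontrivial (Matrix (Fin p) (Fin p) ℂ) :=
    ⟨⟨0, 1, fun h => by simpa using congr_fun (congr_fun h i0) i0⟩⟩
  set c := ‖T‖ with hc
  set a := T * Tᴴ with ha
  have hsa : _root_.IsSelfAdjoint a := Matrix.isHermitian_mul_conjTranspose_self T
  have hnorm : ‖a‖ = c * c := by
    have h1 := Matrix.l2_opNorm_conjTranspose_mul_self (Tᴴ)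
    rwa [Matrix.conjTranspose_conjTranspose, Matrix.l2_opNorm_conjTranspose] at h1
  rcases CStarAlgebra.norm_or_neg_norm_mem_spectrum hsa with hspec | hspec
  · -- positive case
    have hdet := aux_det_zero_of_mem_spectrum a hspec
    rw [hnorm] at hdet
    refine ⟨((c : ℂ)⁻¹ * (c : ℂ)⁻¹) • Tᴴ, ?_, ?_⟩
    · rw [norm_smul, Matrix.l2_opNorm_conjTranspose]
      simp only [norm_mul, norm_inv, Complex.norm_real, Real.norm_eq_abs,
        abs_of_pos hT]
      rw [← hc]
      field_simp
    · rw [Matrix.mul_smul, ← ha]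
      have hkey : (1 : Matrix (Fin p) (Fin p) ℂ) - ((c : ℂ)⁻¹ * (c : ℂ)⁻¹) • a
          = ((c : ℂ)⁻¹ * (c : ℂ)⁻¹) • (((c * c : ℝ) : ℂ) • (1 : Matrix (Fin p) (Fin p) ℂ) - a) := by
        rw [smul_sub, smul_smul]
        have hc0 : (c : ℂ) ≠ 0 := by
          exact_mod_cast Complex.ofReal_ne_zero.2 (ne_of_gt hT)
        have : ((c : ℂ)⁻¹ * (c : ℂ)⁻¹) * ((c * c : ℝ) : ℂ) = 1 := by
          push_cast; field_simp
        rw [this, one_smul]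
      rw [hkey, Matrix.det_smul, hdet, mul_zero]
  · -- negative case : contradiction
    exfalso
    have hdet := aux_det_zero_of_mem_spectrum a hspec
    obtain ⟨v, hv0, hv⟩ := (Matrix.exists_mulVec_eq_zero_iff).2 hdet
    have hav : a *ᵥ v = ((-‖a‖ : ℝ) : ℂ) • v := by
      have h2 : ((-‖a‖ : ℝ) : ℂ) • v - a *ᵥ v = 0 := by
        rw [← hv, Matrix.sub_mulVec, Matrix.smul_mulVec, Matrix.one_mulVec]
      exact (sub_eq_zero.mp h2).symm
    have hpsd : (0 : ℂ) ≤ star v ⬝ᵥ (a *ᵥ v) :=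
      (Matrix.posSemidef_self_mul_conjTranspose T).dotProduct_mulVec_nonneg v
    rw [hav, dotProduct_smul] at hpsd
    have hpos : (0 : ℂ) < star v ⬝ᵥ v := Matrix.dotProduct_star_self_pos_iff.2 hv0
    set t : ℂ := star v ⬝ᵥ v with hts
    have htre : 0 < t.re ∧ t.im = 0 := by
      rw [Complex.lt_def] at hpos
      constructor
      · simpa using hpos.1
      · simpa using hpos.2.symm
    have hre : 0 ≤ (((-‖a‖ : ℝ) : ℂ) • t).re :=
      (Complex.le_def.1 hpsd).1.trans_eq' (by simp)
    rw [smul_eq_mul, Complex.mul_re, Complex.ofReal_re, Complex.ofReal_im,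
      htre.2] at hre
    simp only [zero_mul, sub_zero] at hre
    have hna : 0 < ‖a‖ := by rw [hnorm]; positivity
    nlinarith [htre.1]

/-- Theorem IVA: robust performance in the perturbed formulation.  With
`G = [[0,0,I],[0,0,I],[CuΦ⁻¹S, S_c, 0]]` and
`m = inf { max(|δ'|,|δ_c'|,‖Δ_f‖) : det(I − G·block-diag(δ'I, δ_c'I, Δ_f)) = 0 }`,
for all real `δ, δ_c` with `max(|δ|,|δ_c|) < m`, `‖CuΦ⁻¹δS + δ_c S_c‖ ≤ 1/m`. -/
theorem thm_IVA_perturbed_robust_performance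
    {n p : ℕ}
    (A S : Matrix (Fin n) (Fin n) ℂ) (Cu Sc : Matrix (Fin p) (Fin n) ℂ) (s : ℂ)
    (hΦ : IsUnit (s • (1 : Matrix (Fin n) (Fin n) ℂ) - A))
    (G : Matrix ((Fin n ⊕ Fin n) ⊕ Fin p) ((Fin n ⊕ Fin n) ⊕ Fin n) ℂ)
    (hG : G = Matrix.fromBlocks
        (0 : Matrix (Fin n ⊕ Fin n) (Fin n ⊕ Fin n) ℂ)
        (Matrix.fromRows (1 : Matrix (Fin n) (Fin n) ℂ) (1 : Matrix (Fin n) (Fin n) ℂ))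
        (Matrix.fromCols (Cu * (s • (1 : Matrix (Fin n) (Fin n) ℂ) - A)⁻¹ * S) Sc)
        (0 : Matrix (Fin p) (Fin n) ℂ))
    (P : Set ℝ)
    (hP : P = {x : ℝ | ∃ (δ' δc' : ℝ) (Δf : Matrix (Fin n) (Fin p) ℂ),
        x = max |δ'| (max |δc'| ‖Δf‖) ∧
        ((1 : Matrix ((Fin n ⊕ Fin n) ⊕ Fin p) ((Fin n ⊕ Fin n) ⊕ Fin p) ℂ)
          - G * Matrix.fromBlocks
              (Matrix.fromBlocks ((δ' : ℂ) • (1 : Matrix (Fin n) (Fin n) ℂ)) 0 0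
                ((δc' : ℂ) • (1 : Matrix (Fin n) (Fin n) ℂ)))
              0 0 Δf).det = 0})
    (hne : P.Nonempty) (hm : 0 < sInf P) :
    ∀ δ δc : ℝ, max |δ| |δc| < sInf P →
      ‖Cu * (s • (1 : Matrix (Fin n) (Fin n) ℂ) - A)⁻¹ * ((δ : ℂ) • S)
          + (δc : ℂ) • Sc‖ ≤ 1 / sInf P := by
  intro δ δc hδ
  by_contra hcon
  push_neg at hcon
  set T1 : Matrix (Fin p) (Fin n) ℂ := Cu * (s • (1 : Matrix (Fin n) (Fin n) ℂ) - A)⁻¹ * S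
    with hT1
  set T : Matrix (Fin p) (Fin n) ℂ :=
    Cu * (s • (1 : Matrix (Fin n) (Fin n) ℂ) - A)⁻¹ * ((δ : ℂ) • S) + (δc : ℂ) • Sc with hT
  have hTsplit : T = (δ : ℂ) • T1 + (δc : ℂ) • Sc := by
    rw [hT, hT1, Matrix.mul_smul]
  have hTpos : 0 < ‖T‖ := lt_trans (one_div_pos.mpr hm) hcon
  obtain ⟨Δf, hΔn, hΔd⟩ := aux_exists_destabilizer T hTpos
  have hcon' : 1 < ‖T‖ * sInf P := by
    rw [div_lt_iff₀ hm] at hcon; exact hcon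
  have hΔlt : ‖Δf‖ < sInf P := by
    rw [hΔn, inv_eq_one_div, div_lt_iff₀ hTpos]
    linarith
  have hbig : ((1 : Matrix ((Fin n ⊕ Fin n) ⊕ Fin p) ((Fin n ⊕ Fin n) ⊕ Fin p) ℂ)
        - G * Matrix.fromBlocks
            (Matrix.fromBlocks ((δ : ℂ) • (1 : Matrix (Fin n) (Fin n) ℂ)) 0 0
              ((δc : ℂ) • (1 : Matrix (Fin n) (Fin n) ℂ)))
            0 0 Δf).det = 0 := by
    rw [hG, Matrix.fromBlocks_multiply]
    simp only [Matrix.zero_mul, Matrix.mul_zero, add_zero, zero_add]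
    have h1 : (1 : Matrix ((Fin n ⊕ Fin n) ⊕ Fin p) ((Fin n ⊕ Fin n) ⊕ Fin p) ℂ)
        = Matrix.fromBlocks 1 0 0 1 := Matrix.fromBlocks_one.symm
    rw [h1, sub_eq_add_neg, Matrix.fromBlocks_neg, Matrix.fromBlocks_add]
    simp only [neg_zero, add_zero, zero_add]
    rw [Matrix.det_fromBlocks_one₁₁, Matrix.neg_mul, Matrix.mul_neg, neg_neg]
    have hprod : ((Matrix.fromCols T1 Sc *
          Matrix.fromBlocks ((δ : ℂ) • (1 : Matrix (Fin n) (Fin n) ℂ)) 0 0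
            ((δc : ℂ) • (1 : Matrix (Fin n) (Fin n) ℂ)) : Matrix (Fin p) (Fin n ⊕ Fin n) ℂ) *
        (Matrix.fromRows (1 : Matrix (Fin n) (Fin n) ℂ) 1 * Δf : Matrix (Fin n ⊕ Fin n) (Fin p) ℂ)
          : Matrix (Fin p) (Fin p) ℂ) = T * Δf := by
      rw [← Matrix.mul_assoc, Matrix.mul_assoc _ _ (Matrix.fromRows 1 1),
        Matrix.fromBlocks_mul_fromRows]
      simp only [Matrix.zero_mul, add_zero, zero_add, Matrix.mul_one]
      rw [Matrix.fromCols_mul_fromRows]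
      simp only [Matrix.mul_smul, Matrix.mul_one]
      rw [hTsplit]
    rw [hprod, hΔd]
  have hxP : max |δ| (max |δc| ‖Δf‖) ∈ P := by
    rw [hP]; exact ⟨δ, δc, Δf, rfl, hbig⟩
  have hbdd : BddBelow P := by
    refine ⟨0, fun y hy => ?_⟩
    rw [hP] at hy
    obtain ⟨δ', δc', Δ', hy, -⟩ := hy
    rw [hy]
    exact le_trans (abs_nonneg δ') (le_max_left _ _)
  have hle := csInf_le hbdd hxP
  have hxlt : max |δ| (max |δc| ‖Δf‖) < sInf P :=
    max_lt (lt_of_le_of_lt (le_max_left _ _) hδ)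
      (max_lt (lt_of_le_of_lt (le_max_right _ _) hδ) hΔlt)
  linarith
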